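/- (Lemma 3.2 (ii): Lipschitz continuity of S.) For every R > 0 there exists a constant C ≥ 0, depending only on C₀, K, the sequence E, and R, such that for all V, Ṽ ∈ L²(ω_z) with V ≥ 0 and Ṽ ≥ 0 almost everywhere and ‖V‖_{L²(ω_z)} ≤ R, ‖Ṽ‖_{L²(ω_z)} ≤ R, one has |S[V] z − S[Ṽ] z| ≤ C * ‖V − Ṽ‖_{L²(ω_z)} for almost every z ∈ ω_z; consequently ‖S[V] − S[Ṽ]‖_{L²(ω_z)} ≤ C' * ‖V − Ṽ‖_{L²(ω_z)} for a constant C' depending only on C₀, K, E, R and the measure of ω_z. -/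

import Mathlib

open MeasureTheory Real

lemma aux_exp_lip {a b : ℝ} (ha : 0 ≤ a) (hb : 0 ≤ b) :
    |Real.exp (-a) - Real.exp (-b)| ≤ |a - b| := by
  wlog h : a ≤ b generalizing a b
  · rw [abs_sub_comm, abs_sub_comm a b]; exact this hb ha (le_of_not_ge h)
  rw [abs_of_nonneg (by simpa using Real.exp_le_exp.2 (by linarith)),
    abs_of_nonpos (by linarith)]
  have h1 : 1 - (b - a) ≤ Real.exp (-(b-a)) := by
    have := Real.add_one_le_exp (-(b-a)); linarith
  have h2 : Real.exp (-a) - Real.exp (-b) = Real.exp (-a) * (1 - Real.exp (-(b-a))) := by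
    rw [mul_sub, mul_one, ← Real.exp_add]; ring_nf
  have h3 : Real.exp (-a) ≤ 1 := Real.exp_le_one_iff.2 (by linarith)
  have h4 : Real.exp (-(b-a)) ≤ 1 := Real.exp_le_one_iff.2 (by linarith)
  calc Real.exp (-a) - Real.exp (-b) = Real.exp (-a) * (1 - Real.exp (-(b-a))) := h2
    _ ≤ 1 * (1 - Real.exp (-(b-a))) :=
        mul_le_mul_of_nonneg_right h3 (by linarith)
    _ ≤ -(a - b) := by linarith

lemma aux_poly {K x : ℝ} (hK : 0 ≤ K) (hx : 0 ≤ x) (j : ℕ) :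
    (x + K) ^ j * Real.exp (-x) ≤ (2*(j+1)+K) ^ j * Real.exp (-(1/2 : ℝ) * x) := by
  set d : ℝ := 2 * (j + 1) with hd
  have hdpos : 0 < d := by positivity
  have hjd : (j : ℝ) / d ≤ 1 / 2 := by
    rw [div_le_div_iff₀ hdpos two_pos]; push_cast [hd]; nlinarith [Nat.cast_nonneg (α := ℝ) j]
  have h2 : x + K ≤ (d + K) * (1 + x / d) := by
    have h : d * (x / d) = x := mul_div_cancel₀ x hdpos.ne'
    have h5 : 0 ≤ K * (x / d) := by positivity
    nlinarith
  have h3 : (x + K) ^ j ≤ (d + K) ^ j * Real.exp ((j : ℝ) * (x / d)) := by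
    calc (x + K) ^ j ≤ ((d + K) * (1 + x / d)) ^ j := by
          apply pow_le_pow_left₀ (by linarith) h2
      _ = (d + K) ^ j * (1 + x / d) ^ j := mul_pow _ _ _
      _ ≤ (d + K) ^ j * Real.exp (x / d) ^ j := by
          refine mul_le_mul_of_nonneg_left ?_ (by positivity)
          exact pow_le_pow_left₀ (by positivity) (by linarith [Real.add_one_le_exp (x / d)]) j
      _ = (d + K) ^ j * Real.exp ((j : ℝ) * (x / d)) := by rw [← Real.exp_nat_mul]
  have hjx : (j : ℝ) * (x / d) + -x ≤ -(1/2 : ℝ) * x := by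
    have : (j : ℝ) * (x / d) ≤ (1/2) * x := by
      calc (j : ℝ) * (x / d) = ((j:ℝ)/d) * x := by ring
        _ ≤ (1/2) * x := mul_le_mul_of_nonneg_right hjd hx
    linarith
  calc (x + K) ^ j * Real.exp (-x)
      ≤ ((d + K) ^ j * Real.exp ((j : ℝ) * (x / d))) * Real.exp (-x) :=
        mul_le_mul_of_nonneg_right h3 (Real.exp_pos _).le
    _ = (d + K) ^ j * Real.exp ((j : ℝ) * (x / d) + -x) := by rw [mul_assoc, ← Real.exp_add]
    _ ≤ (d + K) ^ j * Real.exp (-(1/2 : ℝ) * x) :=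
        mul_le_mul_of_nonneg_left (Real.exp_le_exp.2 hjx) (by positivity)
    _ = (2*(j+1)+K) ^ j * Real.exp (-(1/2 : ℝ) * x) := by rw [hd]

lemma aux_CS {μ : Measure (ℝ × ℝ)} {f h : (ℝ × ℝ) → ℝ}
    (hfm : AEStronglyMeasurable f μ) (hhm : AEStronglyMeasurable h μ)
    (hf0 : 0 ≤ᵐ[μ] f) (hh0 : 0 ≤ᵐ[μ] h)
    (hf2 : Integrable (fun z => f z ^ 2) μ) (hh2 : Integrable (fun z => h z ^ 2) μ) :
    ∫ z, f z * h z ∂μ ≤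
      Real.sqrt (∫ z, f z ^ 2 ∂μ) * Real.sqrt (∫ z, h z ^ 2 ∂μ) := by
  have hpq : Real.HolderConjugate 2 2 := Real.HolderConjugate.two_two
  have hfL : MemLp f (ENNReal.ofReal 2) μ := by
    rw [show ENNReal.ofReal 2 = 2 by simp [ENNReal.ofReal_ofNat]]
    exact (memLp_two_iff_integrable_sq hfm).2 hf2
  have hhL : MemLp h (ENNReal.ofReal 2) μ := by
    rw [show ENNReal.ofReal 2 = 2 by simp [ENNReal.ofReal_ofNat]]
    exact (memLp_two_iff_integrable_sq hhm).2 hh2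
  have key := integral_mul_le_Lp_mul_Lq_of_nonneg hpq hf0 hh0 hfL hhL
  calc ∫ z, f z * h z ∂μ
      ≤ (∫ a, f a ^ (2:ℝ) ∂μ) ^ ((1:ℝ)/2) * (∫ a, h a ^ (2:ℝ) ∂μ) ^ ((1:ℝ)/2) := key
    _ = Real.sqrt (∫ z, f z ^ 2 ∂μ) * Real.sqrt (∫ z, h z ^ 2 ∂μ) := by
        rw [Real.sqrt_eq_rpow, Real.sqrt_eq_rpow]
        congr 2 <;>
        · apply integral_congr_ae; filter_upwards with z
          rw [show (2:ℝ) = ((2:ℕ):ℝ) by norm_num, Real.rpow_natCast]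

theorem stmt16
    (ω : Set (ℝ × ℝ)) (hωmeas : MeasurableSet ω) (hωbd : Bornology.IsBounded ω)
    (E : ℕ → ℝ) (hE : ∀ n, 0 ≤ E n)
    (hEsum : ∀ lam : ℝ, 0 < lam → Summable fun n => Real.exp (-lam * E n))
    (g : ℕ → ℝ × ℝ → ℝ) (hgmeas : ∀ n, Measurable (g n))
    (C₀ K : ℝ) (hC₀ : 0 < C₀) (hK : 0 ≤ K)
    (hg0 : ∀ n, ∀ᵐ z ∂(volume.restrict ω), 0 ≤ g n z)
    (hg1 : ∀ n, (∫ z in ω, g n z) = 1)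
    (hgbd : ∀ n, ∀ᵐ z ∂(volume.restrict ω), g n z ≤ C₀ * (E n + K) ^ 2)
    (Vn : ((ℝ × ℝ) → ℝ) → ℕ → ℝ)
    (hVn : ∀ V n, Vn V n = ∫ z in ω, V z * g n z)
    (Zf : ((ℝ × ℝ) → ℝ) → ℝ)
    (hZf : ∀ V, Zf V = ∑' n, Real.exp (-(E n + Vn V n)))
    (S : ((ℝ × ℝ) → ℝ) → (ℝ × ℝ) → ℝ)
    (hS : ∀ V z, S V z = (∑' n, Real.exp (-(E n + Vn V n)) * g n z) / Zf V) :
    ∀ R : ℝ, 0 < R →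
      ∃ C : ℝ, 0 ≤ C ∧ ∃ C' : ℝ, 0 ≤ C' ∧
        ∀ V W : (ℝ × ℝ) → ℝ, Measurable V → Measurable W →
          IntegrableOn (fun z => V z ^ 2) ω → IntegrableOn (fun z => W z ^ 2) ω →
          (∀ᵐ z ∂(volume.restrict ω), 0 ≤ V z) →
          (∀ᵐ z ∂(volume.restrict ω), 0 ≤ W z) →
          (∫ z in ω, V z ^ 2) ^ ((1 : ℝ) / 2) ≤ R →
          (∫ z in ω, W z ^ 2) ^ ((1 : ℝ) / 2) ≤ R →
          (∀ᵐ z ∂(volume.restrict ω),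
            |S V z - S W z| ≤ C * (∫ z in ω, (V z - W z) ^ 2) ^ ((1 : ℝ) / 2)) ∧
          (∫ z in ω, (S V z - S W z) ^ 2) ^ ((1 : ℝ) / 2) ≤
            C' * (∫ z in ω, (V z - W z) ^ 2) ^ ((1 : ℝ) / 2) := by
  intro R hR
  set μ := volume.restrict ω with hμ
  haveI hfin : IsFiniteMeasure μ := by
    constructor
    rw [hμ, Measure.restrict_apply_univ]
    exact hωbd.measure_lt_top
  have hEK : ∀ n, (0:ℝ) ≤ E n + K := fun n => add_nonneg (hE n) hK
  -- summability of polynomial-weighted series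
  have hsump : ∀ j : ℕ, Summable (fun n => (E n + K) ^ j * Real.exp (-E n)) := by
    intro j
    refine Summable.of_nonneg_of_le
      (fun n => mul_nonneg (pow_nonneg (add_nonneg (hE n) hK) _) (Real.exp_pos _).le)
      (fun n => aux_poly hK (hE n) j) ?_
    exact (hEsum (1/2) (by norm_num)).mul_left _
  have hsum0 : Summable (fun n => Real.exp (-E n)) := by
    simpa using hEsum 1 one_pos
  set A1 : ℝ := ∑' n, (E n + K) ^ 1 * Real.exp (-E n) with hA1
  set A2 : ℝ := ∑' n, (E n + K) ^ 2 * Real.exp (-E n) with hA2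
  set A3 : ℝ := ∑' n, (E n + K) ^ 3 * Real.exp (-E n) with hA3
  have hA1n : 0 ≤ A1 := tsum_nonneg fun n => mul_nonneg (pow_nonneg (add_nonneg (hE n) hK) _) (Real.exp_pos _).le
  have hA2n : 0 ≤ A2 := tsum_nonneg fun n => mul_nonneg (pow_nonneg (add_nonneg (hE n) hK) _) (Real.exp_pos _).le
  have hA3n : 0 ≤ A3 := tsum_nonneg fun n => mul_nonneg (pow_nonneg (add_nonneg (hE n) hK) _) (Real.exp_pos _).le
  set zmin : ℝ := Real.exp (-(E 0 + R * (Real.sqrt C₀ * (E 0 + K)))) with hzmin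
  have hzminpos : 0 < zmin := Real.exp_pos _
  -- the constants
  set C : ℝ := Real.sqrt C₀ * C₀ * A3 / zmin + C₀ * A2 * (Real.sqrt C₀ * A1) / zmin ^ 2 with hC
  have hCpos : 0 ≤ C := by positivity
  set C' : ℝ := C * Real.sqrt ((μ Set.univ).toReal) with hC'
  have hC'pos : 0 ≤ C' := by positivity
  refine ⟨C, hCpos, C', hC'pos, ?_⟩
  intro V W hVm hWm hV2 hW2 hV0 hW0 hVR hWR
  rw [← Real.sqrt_eq_rpow] at hVR hWR
  -- basic facts about g
  have hgae : ∀ᵐ z ∂μ, ∀ n, 0 ≤ g n z ∧ g n z ≤ C₀ * (E n + K) ^ 2 :=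
    ae_all_iff.2 fun n => (hg0 n).and (hgbd n)
  have hgint : ∀ n, Integrable (g n) μ := by
    intro n
    refine memLp_one_iff_integrable.1
      ((memLp_top_of_bound (hgmeas n).aestronglyMeasurable (C₀ * (E n + K) ^ 2) ?_).mono_exponent le_top)
    filter_upwards [hg0 n, hgbd n] with z h1 h2
    rw [Real.norm_of_nonneg h1]; exact h2
  have hgsq_int : ∀ n, Integrable (fun z => g n z ^ 2) μ := by
    intro n
    refine memLp_one_iff_integrable.1
      ((memLp_top_of_bound ((hgmeas n).pow_const 2).aestronglyMeasurable ((C₀ * (E n + K) ^ 2) ^ 2) ?_).mono_exponent le_top)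
    filter_upwards [hg0 n, hgbd n] with z h1 h2
    rw [Real.norm_of_nonneg (by positivity)]
    exact pow_le_pow_left₀ h1 h2 2
  have hgsq_bd : ∀ n, ∫ z, g n z ^ 2 ∂μ ≤ C₀ * (E n + K) ^ 2 := by
    intro n
    calc ∫ z, g n z ^ 2 ∂μ ≤ ∫ z, (C₀ * (E n + K) ^ 2) * g n z ∂μ := by
          refine integral_mono_of_nonneg ?_ ((hgint n).const_mul _) ?_
          · filter_upwards with z; positivity
          · filter_upwards [hg0 n, hgbd n] with z h1 h2
            calc g n z ^ 2 = g n z * g n z := sq (g n z) ▸ by ring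
              _ ≤ (C₀ * (E n + K) ^ 2) * g n z := mul_le_mul_of_nonneg_right h2 h1
      _ = (C₀ * (E n + K) ^ 2) * ∫ z, g n z ∂μ := integral_const_mul _ _
      _ = C₀ * (E n + K) ^ 2 := by rw [show ∫ z, g n z ∂μ = 1 from hg1 n, mul_one]
  have hgL2 : ∀ n, Real.sqrt (∫ z, g n z ^ 2 ∂μ) ≤ Real.sqrt C₀ * (E n + K) := by
    intro n
    calc Real.sqrt (∫ z, g n z ^ 2 ∂μ) ≤ Real.sqrt (C₀ * (E n + K) ^ 2) :=
          Real.sqrt_le_sqrt (hgsq_bd n)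
      _ = Real.sqrt C₀ * (E n + K) := by
          rw [Real.sqrt_mul hC₀.le, Real.sqrt_sq (hEK n)]
  -- per-potential facts
  have key : ∀ U : (ℝ × ℝ) → ℝ, Measurable U → IntegrableOn (fun z => U z ^ 2) ω →
      (∀ᵐ z ∂μ, 0 ≤ U z) → Real.sqrt (∫ z in ω, U z ^ 2) ≤ R →
      (∀ n, 0 ≤ Vn U n) ∧ (∀ n, Vn U n ≤ R * (Real.sqrt C₀ * (E n + K))) := by
    intro U hUm hU2 hU0 hUR
    constructor
    · intro n
      rw [hVn]
      refine integral_nonneg_of_ae ?_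
      filter_upwards [hU0, hg0 n] with z h1 h2
      exact mul_nonneg h1 h2
    · intro n
      rw [hVn]
      calc (∫ z in ω, U z * g n z) ≤
            Real.sqrt (∫ z, U z ^ 2 ∂μ) * Real.sqrt (∫ z, g n z ^ 2 ∂μ) :=
            aux_CS hUm.aestronglyMeasurable (hgmeas n).aestronglyMeasurable hU0 (hg0 n) hU2 (hgsq_int n)
        _ ≤ R * (Real.sqrt C₀ * (E n + K)) := by
            refine mul_le_mul hUR (hgL2 n) (Real.sqrt_nonneg _) hR.le
  obtain ⟨hVnn, hVub⟩ := key V hVm hV2 hV0 hVR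
  obtain ⟨hWnn, hWub⟩ := key W hWm hW2 hW0 hWR
  -- summability of Z series and lower bound
  have hZs : ∀ (v : ℕ → ℝ), (∀ n, 0 ≤ v n) → Summable (fun n => Real.exp (-(E n + v n))) := by
    intro v hv
    refine Summable.of_nonneg_of_le (fun n => (Real.exp_pos _).le) (fun n => ?_) hsum0
    exact Real.exp_le_exp.2 (by linarith [hv n, hE n])
  have hZVs := hZs _ hVnn
  have hZWs := hZs _ hWnn
  have hZlb : ∀ (U : (ℝ×ℝ) → ℝ), (∀ n, 0 ≤ Vn U n) →
      (∀ n, Vn U n ≤ R * (Real.sqrt C₀ * (E n + K))) → zmin ≤ Zf U := by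
    intro U h1 h2
    rw [hZf]
    calc zmin ≤ Real.exp (-(E 0 + Vn U 0)) := by
          rw [hzmin, Real.exp_le_exp]
          have := h2 0; linarith
      _ ≤ ∑' n, Real.exp (-(E n + Vn U n)) :=
          Summable.le_tsum (hZs _ h1) 0 (fun j _ => (Real.exp_pos _).le)
  have hZVlb := hZlb V hVnn hVub
  have hZWlb := hZlb W hWnn hWub
  -- integrability of V, W and products with g
  have hL1 : ∀ U : (ℝ × ℝ) → ℝ, Measurable U → IntegrableOn (fun z => U z ^ 2) ω →
      Integrable U μ := by
    intro U hUm hU2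
    exact memLp_one_iff_integrable.1
      (((memLp_two_iff_integrable_sq hUm.aestronglyMeasurable).2 hU2).mono_exponent
        (by norm_num))
  have hVint := hL1 V hVm hV2
  have hWint := hL1 W hWm hW2
  have hmulint : ∀ (U : (ℝ×ℝ) → ℝ), Integrable U μ → ∀ n,
      Integrable (fun z => U z * g n z) μ := by
    intro U hU n
    have : Integrable (fun z => g n z * U z) μ := by
      refine hU.bdd_mul (c := C₀ * (E n + K) ^ 2) (hgmeas n).aestronglyMeasurable ?_
      filter_upwards [hg0 n, hgbd n] with z h1 h2
      rw [Real.norm_of_nonneg h1]; exact h2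
    exact this.congr (by filter_upwards with z using mul_comm _ _)
  -- difference of V_n's
  set δ : ℝ := Real.sqrt (∫ z in ω, (V z - W z) ^ 2) with hδ
  have hδn : 0 ≤ δ := Real.sqrt_nonneg _
  have hdiffsq_int : Integrable (fun z => (V z - W z) ^ 2) μ := by
    refine Integrable.mono' ((hV2.const_mul 2).add (hW2.const_mul 2))
      ((hVm.sub hWm).pow_const 2).aestronglyMeasurable ?_
    filter_upwards with z
    simp only [Pi.add_apply]
    rw [Real.norm_of_nonneg (by positivity)]
    nlinarith [sq_nonneg (V z + W z)]
  have hVnd : ∀ n, |Vn V n - Vn W n| ≤ δ * (Real.sqrt C₀ * (E n + K)) := by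
    intro n
    have hsub : Vn V n - Vn W n = ∫ z, (V z - W z) * g n z ∂μ := by
      rw [hVn, hVn, ← integral_sub (hmulint V hVint n) (hmulint W hWint n)]
      congr 1; funext z; ring
    rw [hsub]
    have habs : |∫ z, (V z - W z) * g n z ∂μ| ≤ ∫ z, |V z - W z| * g n z ∂μ := by
      have h1 := norm_integral_le_integral_norm (μ := μ) (f := fun z => (V z - W z) * g n z)
      rw [Real.norm_eq_abs] at h1
      refine h1.trans (le_of_eq (integral_congr_ae ?_))
      filter_upwards [hg0 n] with z h2
      rw [Real.norm_eq_abs, abs_mul, abs_of_nonneg h2]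
    refine habs.trans ?_
    calc ∫ z, |V z - W z| * g n z ∂μ
        ≤ Real.sqrt (∫ z, |V z - W z| ^ 2 ∂μ) * Real.sqrt (∫ z, g n z ^ 2 ∂μ) := by
          refine aux_CS ((hVm.sub hWm).abs).aestronglyMeasurable
            (hgmeas n).aestronglyMeasurable ?_ (hg0 n) ?_ (hgsq_int n)
          · filter_upwards with z using abs_nonneg _
          · refine hdiffsq_int.congr ?_
            filter_upwards with z using (sq_abs _).symm
      _ = Real.sqrt (∫ z, (V z - W z) ^ 2 ∂μ) * Real.sqrt (∫ z, g n z ^ 2 ∂μ) := by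
          congr 2
          refine integral_congr_ae ?_
          filter_upwards with z using sq_abs _
      _ ≤ δ * (Real.sqrt C₀ * (E n + K)) := by
          refine mul_le_mul (le_of_eq rfl) (hgL2 n) (Real.sqrt_nonneg _) hδn
  -- termwise bound for Z difference
  have hterm : ∀ n, |Real.exp (-(E n + Vn V n)) - Real.exp (-(E n + Vn W n))| ≤
      (δ * Real.sqrt C₀) * ((E n + K) ^ 1 * Real.exp (-E n)) := by
    intro n
    have hfac : ∀ v : ℝ, Real.exp (-(E n + v)) = Real.exp (-E n) * Real.exp (-v) := by
      intro v; rw [← Real.exp_add]; ring_nf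
    rw [hfac, hfac, ← mul_sub, abs_mul, abs_of_pos (Real.exp_pos _)]
    calc Real.exp (-E n) * |Real.exp (-(Vn V n)) - Real.exp (-(Vn W n))|
        ≤ Real.exp (-E n) * |Vn V n - Vn W n| :=
          mul_le_mul_of_nonneg_left (aux_exp_lip (hVnn n) (hWnn n)) (Real.exp_pos _).le
      _ ≤ Real.exp (-E n) * (δ * (Real.sqrt C₀ * (E n + K))) :=
          mul_le_mul_of_nonneg_left (hVnd n) (Real.exp_pos _).le
      _ = (δ * Real.sqrt C₀) * ((E n + K) ^ 1 * Real.exp (-E n)) := by ring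
  have hZdiff : |Zf V - Zf W| ≤ δ * Real.sqrt C₀ * A1 := by
    rw [hZf, hZf, ← Summable.tsum_sub hZVs hZWs]
    have hsabs : Summable (fun n => |Real.exp (-(E n + Vn V n)) - Real.exp (-(E n + Vn W n))|) :=
      Summable.of_nonneg_of_le (fun n => abs_nonneg _) hterm ((hsump 1).mul_left _)
    calc |∑' n, (Real.exp (-(E n + Vn V n)) - Real.exp (-(E n + Vn W n)))|
        ≤ ∑' n, |Real.exp (-(E n + Vn V n)) - Real.exp (-(E n + Vn W n))| := by
          have h' : Summable (fun n => ‖Real.exp (-(E n + Vn V n)) - Real.exp (-(E n + Vn W n))‖) := by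
            simpa only [Real.norm_eq_abs] using hsabs
          simpa only [Real.norm_eq_abs] using norm_tsum_le_tsum_norm h'
      _ ≤ ∑' n, (δ * Real.sqrt C₀) * ((E n + K) ^ 1 * Real.exp (-E n)) :=
          Summable.tsum_le_tsum hterm hsabs ((hsump 1).mul_left _)
      _ = δ * Real.sqrt C₀ * A1 := by rw [tsum_mul_left, hA1]
  -- a.e. pointwise work
  have hae : ∀ᵐ z ∂μ, |S V z - S W z| ≤ C * δ := by
    filter_upwards [hgae] with z hgz
    -- numerator summability and bounds at z
    have hnums : ∀ (v : ℕ → ℝ), (∀ n, 0 ≤ v n) →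
        Summable (fun n => Real.exp (-(E n + v n)) * g n z) := by
      intro v hv
      refine Summable.of_nonneg_of_le (fun n => mul_nonneg (Real.exp_pos _).le (hgz n).1)
        (fun n => ?_) ((hsump 2).mul_left C₀)
      calc Real.exp (-(E n + v n)) * g n z ≤ Real.exp (-E n) * (C₀ * (E n + K) ^ 2) := by
            refine mul_le_mul (Real.exp_le_exp.2 (by linarith [hv n])) (hgz n).2 (hgz n).1
              (Real.exp_pos _).le
        _ = C₀ * ((E n + K) ^ 2 * Real.exp (-E n)) := by ring
    have hNVs := hnums _ hVnn
    have hNWs := hnums _ hWnn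
    have hNub : ∀ (v : ℕ → ℝ), (∀ n, 0 ≤ v n) →
        (∑' n, Real.exp (-(E n + v n)) * g n z) ≤ C₀ * A2 := by
      intro v hv
      calc (∑' n, Real.exp (-(E n + v n)) * g n z)
          ≤ ∑' n, C₀ * ((E n + K) ^ 2 * Real.exp (-E n)) := by
            refine Summable.tsum_le_tsum (fun n => ?_) (hnums _ hv) ((hsump 2).mul_left C₀)
            calc Real.exp (-(E n + v n)) * g n z ≤ Real.exp (-E n) * (C₀ * (E n + K) ^ 2) := by
                  refine mul_le_mul (Real.exp_le_exp.2 (by linarith [hv n])) (hgz n).2 (hgz n).1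
                    (Real.exp_pos _).le
              _ = C₀ * ((E n + K) ^ 2 * Real.exp (-E n)) := by ring
        _ = C₀ * A2 := by rw [tsum_mul_left, hA2]
    have hNnn : ∀ (v : ℕ → ℝ), 0 ≤ (∑' n, Real.exp (-(E n + v n)) * g n z) := by
      intro v
      exact tsum_nonneg fun n => mul_nonneg (Real.exp_pos _).le (hgz n).1
    -- numerator difference bound
    have hNdiff : |(∑' n, Real.exp (-(E n + Vn V n)) * g n z) -
        (∑' n, Real.exp (-(E n + Vn W n)) * g n z)| ≤ δ * (Real.sqrt C₀ * C₀ * A3) := by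
      rw [← Summable.tsum_sub hNVs hNWs]
      have htermN : ∀ n, |(Real.exp (-(E n + Vn V n)) - Real.exp (-(E n + Vn W n))) * g n z| ≤
          (δ * Real.sqrt C₀ * C₀) * ((E n + K) ^ 3 * Real.exp (-E n)) := by
        intro n
        rw [abs_mul, abs_of_nonneg (hgz n).1]
        calc |Real.exp (-(E n + Vn V n)) - Real.exp (-(E n + Vn W n))| * g n z
            ≤ ((δ * Real.sqrt C₀) * ((E n + K) ^ 1 * Real.exp (-E n))) * (C₀ * (E n + K) ^ 2) := by
              refine mul_le_mul (hterm n) (hgz n).2 (hgz n).1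
                (mul_nonneg (by positivity) (mul_nonneg (pow_nonneg (add_nonneg (hE n) hK) _) (Real.exp_pos _).le))
          _ = (δ * Real.sqrt C₀ * C₀) * ((E n + K) ^ 3 * Real.exp (-E n)) := by ring
      have hsabsN : Summable (fun n => |(Real.exp (-(E n + Vn V n)) - Real.exp (-(E n + Vn W n))) * g n z|) :=
        Summable.of_nonneg_of_le (fun n => abs_nonneg _) htermN ((hsump 3).mul_left _)
      calc |∑' n, (Real.exp (-(E n + Vn V n)) * g n z - Real.exp (-(E n + Vn W n)) * g n z)|
          = |∑' n, (Real.exp (-(E n + Vn V n)) - Real.exp (-(E n + Vn W n))) * g n z| := by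
            congr 1; apply tsum_congr; intro n; ring
        _ ≤ ∑' n, |(Real.exp (-(E n + Vn V n)) - Real.exp (-(E n + Vn W n))) * g n z| := by
            have h' : Summable (fun n => ‖(Real.exp (-(E n + Vn V n)) - Real.exp (-(E n + Vn W n))) * g n z‖) := by
              simpa only [Real.norm_eq_abs] using hsabsN
            simpa only [Real.norm_eq_abs] using norm_tsum_le_tsum_norm h'
        _ ≤ ∑' n, (δ * Real.sqrt C₀ * C₀) * ((E n + K) ^ 3 * Real.exp (-E n)) :=
            Summable.tsum_le_tsum htermN hsabsN ((hsump 3).mul_left _)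
        _ = δ * (Real.sqrt C₀ * C₀ * A3) := by rw [tsum_mul_left, hA3]; ring
    -- final quotient estimate
    set a : ℝ := ∑' n, Real.exp (-(E n + Vn V n)) * g n z with ha
    set b : ℝ := ∑' n, Real.exp (-(E n + Vn W n)) * g n z with hb
    set x : ℝ := Zf V with hx
    set y : ℝ := Zf W with hy
    have hxpos : 0 < x := lt_of_lt_of_le hzminpos hZVlb
    have hypos : 0 < y := lt_of_lt_of_le hzminpos hZWlb
    have hsplit : a / x - b / y = (a - b) / x + b * (y - x) / (x * y) := by
      field_simp
      ring
    rw [hS, hS, ← ha, ← hb, ← hx, ← hy, hsplit]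
    have h1 : |(a - b) / x| ≤ δ * (Real.sqrt C₀ * C₀ * A3) / zmin := by
      rw [abs_div, abs_of_pos hxpos]
      exact div_le_div₀ (by positivity) hNdiff hzminpos hZVlb
    have h2 : |b * (y - x) / (x * y)| ≤ C₀ * A2 * (δ * Real.sqrt C₀ * A1) / zmin ^ 2 := by
      rw [abs_div, abs_mul, abs_of_pos (mul_pos hxpos hypos), abs_of_nonneg (hNnn _)]
      refine div_le_div₀ (by positivity) ?_ (by positivity) ?_
      · refine mul_le_mul (hNub _ hWnn) ?_ (abs_nonneg _) (by positivity)
        rw [abs_sub_comm]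
        exact hZdiff
      · calc zmin ^ 2 = zmin * zmin := sq zmin
          _ ≤ x * y := mul_le_mul hZVlb hZWlb hzminpos.le (by positivity)
    calc |(a - b) / x + b * (y - x) / (x * y)|
        ≤ |(a - b) / x| + |b * (y - x) / (x * y)| := abs_add_le _ _
      _ ≤ δ * (Real.sqrt C₀ * C₀ * A3) / zmin + C₀ * A2 * (δ * Real.sqrt C₀ * A1) / zmin ^ 2 :=
          add_le_add h1 h2
      _ = C * δ := by rw [hC]; ring
  constructor
  · rw [← Real.sqrt_eq_rpow, ← hδ]
    exact hae
  · rw [← Real.sqrt_eq_rpow, ← Real.sqrt_eq_rpow, ← hδ]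
    have hint : ∫ z, (S V z - S W z) ^ 2 ∂μ ≤ (C * δ) ^ 2 * (μ Set.univ).toReal := by
      calc ∫ z, (S V z - S W z) ^ 2 ∂μ ≤ ∫ _z, (C * δ) ^ 2 ∂μ := by
            refine integral_mono_of_nonneg ?_ (integrable_const _) ?_
            · filter_upwards with z using sq_nonneg _
            · filter_upwards [hae] with z hz
              calc (S V z - S W z) ^ 2 = |S V z - S W z| ^ 2 := (sq_abs _).symm
                _ ≤ (C * δ) ^ 2 := pow_le_pow_left₀ (abs_nonneg _) hz 2
        _ = (C * δ) ^ 2 * (μ Set.univ).toReal := by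
            rw [integral_const, smul_eq_mul, measureReal_def]; ring
    calc Real.sqrt (∫ z, (S V z - S W z) ^ 2 ∂μ)
        ≤ Real.sqrt ((C * δ) ^ 2 * (μ Set.univ).toReal) := Real.sqrt_le_sqrt hint
      _ = (C * δ) * Real.sqrt ((μ Set.univ).toReal) := by
          rw [Real.sqrt_mul (sq_nonneg _), Real.sqrt_sq (by positivity)]
      _ = C' * δ := by rw [hC']; ring
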